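/- Fix λ, χ ∈ ℂ and let E_{λ,χ} be the sl_2-module with basis {v_{λ+2n}}_{n∈ℤ} and action h·v_{λ+2n} = (λ+2n)v_{λ+2n}, e·v_{λ+2n} = v_{λ+2n+2}, f·v_{λ+2n} = (1/2)(χ - (1/2)(λ+2n-2)² - (λ+2n-2))v_{λ+2n-2}. Then E_{λ,χ} has a nonzero proper sl_2-submodule if and only if there exists μ ∈ λ + 2ℤ with χ = μ²/2 + μ. -/

import Mathlib

open Finsupp

/-- The action of `e` on `E_{λ,χ} = ⊕_{n∈ℤ} ℂ v_{λ+2n}` (with `v_{λ+2n}` encoded as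
`single n 1`): `e·v_{λ+2n} = v_{λ+2n+2}`. -/
noncomputable def eOp : (ℤ →₀ ℂ) →ₗ[ℂ] (ℤ →₀ ℂ) :=
  Finsupp.lsum ℂ fun n => Finsupp.lsingle (n + 1)

/-- The action of `h`: `h·v_{λ+2n} = (λ+2n)·v_{λ+2n}`. -/
noncomputable def hOp (lam : ℂ) : (ℤ →₀ ℂ) →ₗ[ℂ] (ℤ →₀ ℂ) :=
  Finsupp.lsum ℂ fun n => (lam + 2 * (n : ℂ)) • Finsupp.lsingle n

/-- The action of `f`:
`f·v_{λ+2n} = (1/2)(χ - (1/2)(λ+2n-2)² - (λ+2n-2))·v_{λ+2n-2}`. -/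
noncomputable def fOp (lam χ : ℂ) : (ℤ →₀ ℂ) →ₗ[ℂ] (ℤ →₀ ℂ) :=
  Finsupp.lsum ℂ fun n =>
    ((1 / 2) * (χ - (1 / 2) * (lam + 2 * (n : ℂ) - 2) ^ 2 - (lam + 2 * (n : ℂ) - 2))) •
      Finsupp.lsingle (n - 1)

noncomputable def coefC (lam χ : ℂ) (n : ℤ) : ℂ :=
  (1 / 2) * (χ - (1 / 2) * (lam + 2 * (n : ℂ) - 2) ^ 2 - (lam + 2 * (n : ℂ) - 2))

lemma eOp_single (n : ℤ) (a : ℂ) : eOp (single n a) = single (n + 1) a := by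
  rw [eOp, Finsupp.lsum_single, Finsupp.lsingle_apply]

lemma hOp_single (lam : ℂ) (n : ℤ) (a : ℂ) :
    hOp lam (single n a) = (lam + 2 * n) • single n a := by
  rw [hOp, Finsupp.lsum_single, LinearMap.smul_apply, Finsupp.lsingle_apply]

lemma fOp_single (lam χ : ℂ) (n : ℤ) (a : ℂ) :
    fOp lam χ (single n a) = coefC lam χ n • single (n - 1) a := by
  rw [fOp, Finsupp.lsum_single, LinearMap.smul_apply, Finsupp.lsingle_apply, coefC]

lemma eOp_apply (v : ℤ →₀ ℂ) (m : ℤ) : eOp v m = v (m - 1) := by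
  induction v using Finsupp.induction_linear with
  | zero => simp
  | add f g hf hg => simp [map_add, hf, hg]
  | single n a =>
      rw [eOp_single]
      simp only [Finsupp.single_apply, show (n + 1 = m) ↔ (n = m - 1) from by omega]

lemma hOp_apply (lam : ℂ) (v : ℤ →₀ ℂ) (m : ℤ) : hOp lam v m = (lam + 2 * m) * v m := by
  induction v using Finsupp.induction_linear with
  | zero => simp
  | add f g hf hg => simp [map_add, hf, hg]; ring
  | single n a =>
      rw [hOp_single]
      simp only [Finsupp.smul_apply, Finsupp.single_apply]
      rcases eq_or_ne n m with rfl | h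
      · simp [smul_eq_mul]
      · simp [h]

lemma fOp_apply (lam χ : ℂ) (v : ℤ →₀ ℂ) (m : ℤ) :
    fOp lam χ v m = coefC lam χ (m + 1) * v (m + 1) := by
  induction v using Finsupp.induction_linear with
  | zero => simp
  | add f g hf hg => simp [map_add, hf, hg]; ring
  | single n a =>
      rw [fOp_single]
      simp only [Finsupp.smul_apply, Finsupp.single_apply,
        show (n - 1 = m) ↔ (n = m + 1) from by omega]
      rcases eq_or_ne n (m + 1) with rfl | h
      · simp [smul_eq_mul]
      · simp [h]

lemma extract_single (lam : ℂ) (S : Submodule ℂ (ℤ →₀ ℂ))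
    (hhS : ∀ v ∈ S, hOp lam v ∈ S) :
    ∀ k : ℕ, ∀ v : ℤ →₀ ℂ, v.support.card = k → v ∈ S → v ≠ 0 →
      ∃ n : ℤ, single n (1 : ℂ) ∈ S := by
  intro k
  induction k using Nat.strong_induction_on with
  | _ k ih =>
    intro v hcard hvS hv0
    obtain ⟨n, hn⟩ := Finsupp.support_nonempty_iff.mpr hv0
    have hvn : v n ≠ 0 := Finsupp.mem_support_iff.mp hn
    set w := hOp lam v - (lam + 2 * n) • v with hw
    have hwS : w ∈ S := S.sub_mem (hhS v hvS) (S.smul_mem _ hvS)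
    have hwapp : ∀ m, w m = (2 * (m : ℂ) - 2 * n) * v m := by
      intro m
      simp only [hw, Finsupp.sub_apply, Finsupp.smul_apply, hOp_apply, smul_eq_mul]
      ring
    by_cases hw0 : w = 0
    · refine ⟨n, ?_⟩
      have key : (v n)⁻¹ • v = single n (1 : ℂ) := by
        ext m
        rcases eq_or_ne m n with rfl | h
        · rw [Finsupp.smul_apply, smul_eq_mul, inv_mul_cancel₀ hvn, Finsupp.single_eq_same]
        · have h2 := hwapp m
          rw [hw0] at h2
          simp only [Finsupp.coe_zero, Pi.zero_apply] at h2
          have hm : (2 * (m : ℂ) - 2 * n) ≠ 0 := by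
            intro hc
            apply h
            have : (m : ℂ) = (n : ℂ) := by linear_combination hc / 2
            exact_mod_cast this
          have hv0m : v m = 0 := by
            rcases mul_eq_zero.mp h2.symm with h' | h'
            · exact absurd h' hm
            · exact h'
          rw [Finsupp.smul_apply, hv0m, smul_zero, Finsupp.single_eq_of_ne' (Ne.symm h)]
      have hmem : (v n)⁻¹ • v ∈ S := S.smul_mem _ hvS
      rwa [key] at hmem
    · have hsub : w.support ⊆ v.support.erase n := by
        intro m hm
        have hwm : w m ≠ 0 := Finsupp.mem_support_iff.mp hm
        rw [Finset.mem_erase, Finsupp.mem_support_iff]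
        constructor
        · intro hc; subst hc
          apply hwm
          rw [hwapp]; ring
        · intro hc; apply hwm; rw [hwapp, hc, mul_zero]
      have hcard' : w.support.card < k := by
        calc w.support.card ≤ (v.support.erase n).card := Finset.card_le_card hsub
          _ < v.support.card := Finset.card_erase_lt_of_mem hn
          _ = k := hcard
      exact ih _ hcard' w rfl hwS hw0

lemma all_singles (lam χ : ℂ) (S : Submodule ℂ (ℤ →₀ ℂ))
    (heS : ∀ v ∈ S, eOp v ∈ S) (hfS : ∀ v ∈ S, fOp lam χ v ∈ S)
    (hc : ∀ n : ℤ, coefC lam χ n ≠ 0) (n : ℤ) (hn : single n (1 : ℂ) ∈ S) :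
    ∀ m : ℤ, single m (1 : ℂ) ∈ S := by
  have up : ∀ m : ℤ, n ≤ m → single m (1 : ℂ) ∈ S := by
    have key : ∀ j : ℕ, single (n + j) (1 : ℂ) ∈ S := by
      intro j
      induction j with
      | zero => simpa using hn
      | succ j ihj =>
        have h1 := heS _ ihj
        rw [eOp_single] at h1
        rwa [show (n : ℤ) + (j : ℤ) + 1 = n + ((j : ℕ) + 1 : ℕ) by push_cast; ring] at h1
    intro m hm
    have := key (m - n).toNat
    rwa [show n + ((m - n).toNat : ℤ) = m by omega] at this
  have down : ∀ m : ℤ, m ≤ n → single m (1 : ℂ) ∈ S := by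
    intro m hm
    have : ∀ j : ℕ, single (n - j) (1 : ℂ) ∈ S := by
      intro j
      induction j with
      | zero => simpa using hn
      | succ j ihj =>
        have h1 := hfS _ ihj
        rw [fOp_single] at h1
        have h2 := S.smul_mem (coefC lam χ (n - j))⁻¹ h1
        rw [smul_smul, inv_mul_cancel₀ (hc _), one_smul] at h2
        have : (n : ℤ) - (j : ℤ) - 1 = n - (j + 1 : ℕ) := by push_cast; ring
        rwa [this] at h2
    have := this (n - m).toNat
    rwa [show n - ((n - m).toNat : ℤ) = m by omega] at this
  intro m
  rcases le_total n m with h | h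
  · exact up m h
  · exact down m h
/-- `E_{λ,χ}` has a nonzero proper sl₂-submodule if and only if there exists
`μ ∈ λ + 2ℤ` with `χ = μ²/2 + μ`. -/
theorem stmt_14 (lam χ : ℂ) :
    (∃ S : Submodule ℂ (ℤ →₀ ℂ), S ≠ ⊥ ∧ S ≠ ⊤ ∧
      (∀ v ∈ S, eOp v ∈ S) ∧ (∀ v ∈ S, hOp lam v ∈ S) ∧ (∀ v ∈ S, fOp lam χ v ∈ S)) ↔
    ∃ n : ℤ, χ = (lam + 2 * (n : ℂ)) ^ 2 / 2 + (lam + 2 * (n : ℂ)) := by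
  constructor
  · rintro ⟨S, hbot, htop, heS, hhS, hfS⟩
    by_contra hcon
    push_neg at hcon
    have hc : ∀ n : ℤ, coefC lam χ n ≠ 0 := by
      intro n h0
      apply hcon (n - 1)
      have : χ = (lam + 2 * ((n : ℂ) - 1)) ^ 2 / 2 + (lam + 2 * ((n : ℂ) - 1)) := by
        rw [coefC] at h0
        linear_combination 2 * h0
      rwa [show ((n - 1 : ℤ) : ℂ) = (n : ℂ) - 1 by push_cast; ring]
    obtain ⟨v, hvS, hv0⟩ := Submodule.ne_bot_iff S |>.mp hbot
    obtain ⟨n, hn⟩ := extract_single lam S hhS v.support.card v rfl hvS hv0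
    have hall := all_singles lam χ S heS hfS hc n hn
    apply htop
    rw [eq_top_iff]
    have hAll : ∀ v : ℤ →₀ ℂ, v ∈ S := by
      intro v
      induction v using Finsupp.induction with
      | zero => exact S.zero_mem
      | single_add a b f _ _ ihf =>
        refine S.add_mem ?_ ihf
        have := S.smul_mem b (hall a)
        rwa [Finsupp.smul_single, smul_eq_mul, mul_one] at this
    intro v _
    exact hAll v
  · rintro ⟨n, hχ⟩
    refine ⟨Finsupp.supported ℂ ℂ {m : ℤ | n < m}, ?_, ?_, ?_, ?_, ?_⟩
    · rw [Submodule.ne_bot_iff]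
      refine ⟨single (n + 1) (1 : ℂ), ?_, ?_⟩
      swap
      · intro h
        have := congrArg (fun g : ℤ →₀ ℂ => g (n + 1)) h
        simp only [Finsupp.single_eq_same, Finsupp.coe_zero, Pi.zero_apply] at this
        exact one_ne_zero this
      rw [Finsupp.mem_supported']
      intro m hm
      simp only [Set.mem_setOf_eq, not_lt] at hm
      exact Finsupp.single_eq_of_ne' (by omega)
    · intro h
      have : single n (1 : ℂ) ∈ Finsupp.supported ℂ ℂ {m : ℤ | n < m} := h ▸ Submodule.mem_top
      rw [Finsupp.mem_supported'] at this
      have := this n (by simp)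
      rw [Finsupp.single_eq_same] at this
      exact one_ne_zero this
    · intro v hv
      rw [Finsupp.mem_supported'] at hv ⊢
      intro m hm
      simp only [Set.mem_setOf_eq, not_lt] at hm
      rw [eOp_apply]
      exact hv (m - 1) (by simp only [Set.mem_setOf_eq, not_lt]; omega)
    · intro v hv
      rw [Finsupp.mem_supported'] at hv ⊢
      intro m hm
      rw [hOp_apply, hv m hm, mul_zero]
    · intro v hv
      rw [Finsupp.mem_supported'] at hv ⊢
      intro m hm
      simp only [Set.mem_setOf_eq, not_lt] at hm
      rw [fOp_apply]
      rcases eq_or_ne m n with rfl | hne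
      · have hc0 : coefC lam χ (m + 1) = 0 := by
          rw [coefC]
          push_cast
          linear_combination hχ / 2
        rw [hc0, zero_mul]
      · rw [hv (m + 1) (by simp only [Set.mem_setOf_eq, not_lt]; omega), mul_zero]
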